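/- Let (S,s) be a finite bijective set-theoretic solution to the Pentagon Equation, with s(x,y) = (x·y, θ_x(y)). Fix a ·-idempotent e₀ and set 1 := θ_{e₀}(e₀) and G₁ := {1·x : x ∈ S}. Define a relation ≈ on S by: u ≈ v if and only if there exist ·-idempotents e,f and g ∈ G₁ with θ_e = θ_f, u = e·g and v = f·g. Then ≈ is an equivalence relation on S which is a congruence of the semigroup (S,·) (u ≈ v implies q·u ≈ q·v and u·q ≈ v·q for all q ∈ S); moreover u ≈ v implies θ_u = θ_v, and u ≈ v implies θ_q(u) ≈ θ_q(v) for every q ∈ S. Consequently s induces a bijective set-theoretic solution to the Pentagon Equation on the quotient set S/≈ (the retract of (S,s)). -/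

import Mathlib

namespace PE

/-- `s` applied to components 1,2 of a triple. -/
def s12 {S : Type*} (s : S × S → S × S) : S × S × S → S × S × S :=
  fun p => ((s (p.1, p.2.1)).1, (s (p.1, p.2.1)).2, p.2.2)

/-- `s` applied to components 1,3 of a triple. -/
def s13 {S : Type*} (s : S × S → S × S) : S × S × S → S × S × S :=
  fun p => ((s (p.1, p.2.2)).1, p.2.1, (s (p.1, p.2.2)).2)

/-- `s` applied to components 2,3 of a triple. -/
def s23 {S : Type*} (s : S × S → S × S) : S × S × S → S × S × S :=
  fun p => (p.1, s (p.2.1, p.2.2))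

/-- `(S, s)` is a set-theoretic solution to the Pentagon Equation:
`s₂₃ ∘ s₁₃ ∘ s₁₂ = s₁₂ ∘ s₂₃`. -/
def IsPE {S : Type*} (s : S × S → S × S) : Prop :=
  s23 s ∘ s13 s ∘ s12 s = s12 s ∘ s23 s

/-- The induced binary operation `x · y`: the first component of `s (x, y)`. -/
def mul {S : Type*} (s : S × S → S × S) (x y : S) : S := (s (x, y)).1

/-- The map `θ_x`: `theta s x y = θ_x(y)` is the second component of `s (x, y)`. -/
def theta {S : Type*} (s : S × S → S × S) (x y : S) : S := (s (x, y)).2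

/-- The retract relation `≈` on `S` (relative to the element `one = θ_{e₀}(e₀)`):
`u ≈ v` iff `u = e·g`, `v = f·g` for `·`-idempotents `e, f` with `θ_e = θ_f`
and `g ∈ G₁ = one·S`. -/
def retRel {S : Type*} (s : S × S → S × S) (one : S) (u v : S) : Prop :=
  ∃ e f g : S, mul s e e = e ∧ mul s f f = f ∧ theta s e = theta s f ∧
    (∃ x : S, g = mul s one x) ∧ u = mul s e g ∧ v = mul s f g

section Aux

variable {S : Type*} (s : S × S → S × S)

lemma s_eq (x y : S) : s (x, y) = (mul s x y, theta s x y) := rfl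

lemma pe_all (hPE : IsPE s) (x y z : S) :
    (mul s (mul s x y) z, mul s (theta s x y) (theta s (mul s x y) z),
      theta s (theta s x y) (theta s (mul s x y) z))
    = (mul s x (mul s y z), theta s x (mul s y z), theta s y z) := by
  have h := congrFun hPE (x, y, z)
  simpa [s12, s13, s23, mul, theta] using h

lemma pe1 (hPE : IsPE s) (x y z : S) :
    mul s (mul s x y) z = mul s x (mul s y z) := (Prod.mk.injEq _ _ _ _ ▸ pe_all s hPE x y z).1

lemma pe2 (hPE : IsPE s) (x y z : S) :
    mul s (theta s x y) (theta s (mul s x y) z) = theta s x (mul s y z) := by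
  have h := pe_all s hPE x y z
  simp only [Prod.mk.injEq] at h
  exact h.2.1

lemma pe3 (hPE : IsPE s) (x y z : S) :
    theta s (theta s x y) (theta s (mul s x y) z) = theta s y z := by
  have h := pe_all s hPE x y z
  simp only [Prod.mk.injEq] at h
  exact h.2.2

lemma pe_s (hPE : IsPE s) (x y z : S) :
    s (theta s x y, theta s (mul s x y) z) = (theta s x (mul s y z), theta s y z) := by
  rw [s_eq s, pe2 s hPE, pe3 s hPE]

lemma fixlem [Finite S] (hbij : Function.Bijective s)
    (pe_s' : ∀ x y z : S,
      s (theta s x y, theta s (mul s x y) z) = (theta s x (mul s y z), theta s y z))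
    {x y : S} (hy : theta s x y = y) (z : S) : theta s (mul s x y) z = z := by
  classical
  letI : Fintype S := Fintype.ofFinite S
  set A : Finset S := Finset.univ.filter (fun w => theta s x w = w) with hA
  set F : Finset (S × S) := Finset.univ.filter
    (fun p => theta s x p.1 = p.1 ∧ theta s (mul s x p.1) p.2 = p.2) with hF
  have hmemF : ∀ p : S × S, p ∈ F ↔
      (theta s x p.1 = p.1 ∧ theta s (mul s x p.1) p.2 = p.2) := by
    intro p; simp [hF]
  have hmemA : ∀ w : S, w ∈ A ↔ theta s x w = w := by intro w; simp [hA]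
  have hcard : F.card = (A ×ˢ (Finset.univ : Finset S)).card := by
    apply Finset.card_bij (fun p _ => s p)
    · intro p hp
      rw [hmemF] at hp
      have hm2 := pe_s' x p.1 p.2
      rw [hp.1, hp.2, Prod.mk.eta] at hm2
      -- hm2 : s p = (theta s x (mul s p.1 p.2), theta s p.1 p.2)
      have h1 : (s p).1 = theta s x (mul s p.1 p.2) := by rw [hm2]
      have h2 : (s p).1 = mul s p.1 p.2 := by
        show (s (p.1, p.2)).1 = _
        rfl
      rw [Finset.mem_product]
      constructor
      · rw [hmemA]
        rw [h2] at h1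
        exact h1.symm
      · exact Finset.mem_univ _
    · intro p _ q _ h
      exact hbij.1 h
    · intro q hq
      rw [Finset.mem_product, hmemA] at hq
      obtain ⟨p, hp⟩ := hbij.2 q
      have hm2 := pe_s' x p.1 p.2
      have hsp : s (p.1, p.2) = q := by rw [Prod.mk.eta]; exact hp
      have hq1 : mul s p.1 p.2 = q.1 := by
        have : (s (p.1, p.2)).1 = q.1 := by rw [hsp]
        exact this
      have hq2 : theta s p.1 p.2 = q.2 := by
        have : (s (p.1, p.2)).2 = q.2 := by rw [hsp]
        exact this
      rw [hq1, hq2, hq.1] at hm2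
      -- hm2 : s (theta s x p.1, theta s (mul s x p.1) p.2) = (q.1, q.2)
      have : s (theta s x p.1, theta s (mul s x p.1) p.2) = s (p.1, p.2) := by
        rw [hm2, hsp, Prod.mk.eta]
      have heq := hbij.1 this
      rw [Prod.mk.injEq] at heq
      refine ⟨p, ?_, hp⟩
      rw [hmemF]
      exact heq
  have hfib : F.card = ∑ w ∈ A, (F.filter (fun p => p.1 = w)).card := by
    apply Finset.card_eq_sum_card_fiberwise
    intro p hp
    rw [Finset.mem_coe, hmemF] at hp
    rw [Finset.mem_coe, hmemA]
    exact hp.1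
  have hfw : ∀ w ∈ A, (F.filter (fun p => p.1 = w)).card =
      (Finset.univ.filter (fun t => theta s (mul s x w) t = t)).card := by
    intro w hw
    apply Finset.card_bij (fun p _ => p.2)
    · intro p hp
      simp only [Finset.mem_filter] at hp ⊢
      rcases hp with ⟨hp1, hp2⟩
      rw [hmemF] at hp1
      refine ⟨Finset.mem_univ _, ?_⟩
      rw [← hp2]
      exact hp1.2
    · intro p hp q hq h
      simp only [Finset.mem_filter] at hp hq
      exact Prod.ext (hp.2.trans hq.2.symm) h
    · intro t ht
      simp only [Finset.mem_filter] at ht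
      refine ⟨(w, t), ?_, rfl⟩
      rw [Finset.mem_filter]
      refine ⟨?_, rfl⟩
      rw [hmemF]
      rw [hmemA] at hw
      exact ⟨hw, ht.2⟩
  have hsum : ∑ w ∈ A, (Finset.univ.filter (fun t => theta s (mul s x w) t = t)).card
      = ∑ w ∈ A, (Finset.univ : Finset S).card := by
    have h1 : F.card = ∑ w ∈ A, (Finset.univ.filter (fun t => theta s (mul s x w) t = t)).card := by
      rw [hfib]; exact Finset.sum_congr rfl hfw
    rw [← h1, hcard, Finset.card_product, Finset.sum_const, smul_eq_mul]
  have hall : ∀ w ∈ A, (Finset.univ.filter (fun t => theta s (mul s x w) t = t)).card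
      = (Finset.univ : Finset S).card := by
    rw [← Finset.sum_eq_sum_iff_of_le]
    · exact hsum
    · intro i _; exact Finset.card_filter_le _ _
  have hyA : y ∈ A := by rw [hmemA]; exact hy
  have := hall y hyA
  have huniv : (Finset.univ.filter (fun t => theta s (mul s x y) t = t)) = Finset.univ := by
    apply Finset.eq_univ_of_card
    rw [this, Finset.card_univ]
  have hz : z ∈ Finset.univ.filter (fun t => theta s (mul s x y) t = t) := by
    rw [huniv]; exact Finset.mem_univ _
  simpa using hz

end Aux


section Core
variable {S : Type*} [Finite S] (s : S × S → S × S)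
/-- All the derived structure, packaged relative to a fixed idempotent `e₀`. -/
lemma one_mul_one (hPE : IsPE s) {e₀ : S} (he₀ : mul s e₀ e₀ = e₀) :
    mul s (theta s e₀ e₀) (theta s e₀ e₀) = theta s e₀ e₀ := by
  have h := pe2 s hPE e₀ e₀ e₀
  rw [he₀] at h
  exact h

lemma theta_one_one (hPE : IsPE s) {e₀ : S} (he₀ : mul s e₀ e₀ = e₀) :
    theta s (theta s e₀ e₀) (theta s e₀ e₀) = theta s e₀ e₀ := by
  have h := pe3 s hPE e₀ e₀ e₀
  rw [he₀] at h
  exact h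

lemma theta_one_id (hPE : IsPE s) (hbij : Function.Bijective s) {e₀ : S} (he₀ : mul s e₀ e₀ = e₀) (z : S) :
    theta s (theta s e₀ e₀) z = z := by
  have h := fixlem s hbij (pe_s s hPE) (theta_one_one s hPE he₀) z
  rwa [one_mul_one s hPE he₀] at h

lemma theta_bij (hPE : IsPE s) (hbij : Function.Bijective s) {e₀ : S} (he₀ : mul s e₀ e₀ = e₀) (x : S) :
    Function.Bijective (theta s x) := by
  classical
  letI : Fintype S := Fintype.ofFinite S
  set B : Finset S := Finset.univ.filter (fun y => Function.Bijective (theta s y)) with hB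
  have hmemB : ∀ y : S, y ∈ B ↔ Function.Bijective (theta s y) := by intro y; simp [hB]
  have honeB : theta s e₀ e₀ ∈ B := by
    rw [hmemB]
    have : theta s (theta s e₀ e₀) = id := funext (theta_one_id s hPE hbij he₀)
    rw [this]
    exact Function.bijective_id
  have hclos1 : ∀ y ∈ B, ∀ q : S, mul s q y ∈ B := by
    intro y hy q
    rw [hmemB] at hy ⊢
    rw [← Finite.injective_iff_bijective]
    intro a b hab
    have h1 := pe3 s hPE q y a
    have h2 := pe3 s hPE q y b
    rw [hab] at h1
    rw [h1] at h2
    exact hy.1 h2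
  have hclos2 : ∀ y ∈ B, ∀ q : S, theta s q y ∈ B := by
    intro y hy q
    have hxy := hclos1 y hy q
    rw [hmemB] at hy hxy ⊢
    rw [← Finite.surjective_iff_bijective]
    intro c
    obtain ⟨a, ha⟩ := hy.2 c
    refine ⟨theta s (mul s q y) a, ?_⟩
    rw [pe3 s hPE q y a]
    exact ha
  have hcard : ((Finset.univ : Finset S) ×ˢ B).card ≤ (B ×ˢ B).card := by
    apply Finset.card_le_card_of_injOn (fun p => s p)
    · intro p hp
      simp only [Finset.mem_coe, Finset.mem_product] at hp ⊢
      have h1 : (s p).1 = mul s p.1 p.2 := by rw [← Prod.mk.eta (p := p)]; rfl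
      have h2 : (s p).2 = theta s p.1 p.2 := by rw [← Prod.mk.eta (p := p)]; rfl
      constructor
      · rw [h1]; exact hclos1 p.2 hp.2 p.1
      · rw [h2]; exact hclos2 p.2 hp.2 p.1
    · intro p _ q _ h
      exact hbij.1 h
  have hBpos : 0 < B.card := Finset.card_pos.mpr ⟨_, honeB⟩
  rw [Finset.card_product, Finset.card_product] at hcard
  have hle : (Finset.univ : Finset S).card ≤ B.card :=
    Nat.le_of_mul_le_mul_right (by rwa [mul_comm (Finset.univ : Finset S).card,
      mul_comm B.card] at hcard) hBpos
  have hBuniv : B = Finset.univ := by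
    apply Finset.eq_univ_of_card
    have := Finset.card_le_univ B
    rw [Finset.card_univ] at hle
    omega
  have : x ∈ B := by rw [hBuniv]; exact Finset.mem_univ _
  rw [hmemB] at this
  exact this

end Core



section Core2
set_option linter.unusedSectionVars false
variable {S : Type*} [Finite S] (s : S × S → S × S)

lemma runit (hPE : IsPE s) (hbij : Function.Bijective s)
    (htb : ∀ x : S, Function.Bijective (theta s x))
    {u b b' z : S} (hb : mul s b b' = b) (hz : theta s u z = b') : mul s u z = u := by
  obtain ⟨p, hp⟩ := hbij.2 (u, b)
  have hp1 : mul s p.1 p.2 = u := by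
    have : (s (p.1, p.2)).1 = u := by rw [Prod.mk.eta, hp]
    exact this
  have hp2 : theta s p.1 p.2 = b := by
    have : (s (p.1, p.2)).2 = b := by rw [Prod.mk.eta, hp]
    exact this
  have h := pe2 s hPE p.1 p.2 z
  rw [hp1, hp2, hz, hb] at h
  -- h : b = theta s p.1 (mul s p.2 z)
  have hdz : mul s p.2 z = p.2 := by
    apply (htb p.1).1
    rw [← h, hp2]
  calc mul s u z = mul s (mul s p.1 p.2) z := by rw [hp1]
    _ = mul s p.1 (mul s p.2 z) := pe1 s hPE _ _ _
    _ = mul s p.1 p.2 := by rw [hdz]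
    _ = u := hp1

/-- Every `·`-idempotent is a global right identity. -/
lemma idem_right_id (hPE : IsPE s) (hbij : Function.Bijective s)
    (htb : ∀ x : S, Function.Bijective (theta s x))
    {e : S} (he : mul s e e = e) (u : S) : mul s u e = u := by
  classical
  letI : Fintype S := Fintype.ofFinite S
  set U : S → Finset S := fun v => Finset.univ.filter (fun t => mul s v t = v) with hU
  have hmemU : ∀ v t : S, t ∈ U v ↔ mul s v t = v := by intro v t; simp [hU]
  have hpre : ∀ v b : S, ∀ t ∈ U b, ∀ z, theta s v z = t → z ∈ U v := by
    intro v b t ht z hz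
    rw [hmemU] at ht ⊢
    exact runit s hPE hbij htb ht hz
  have hle : ∀ v b : S, (U b).card ≤ (U v).card := by
    intro v b
    apply Finset.card_le_card_of_injOn (fun t => (Equiv.ofBijective _ (htb v)).symm t)
    · intro t ht
      apply hpre v b t ht
      exact Equiv.ofBijective_apply_symm_apply _ _ _
    · intro a _ c _ h
      exact (Equiv.ofBijective _ (htb v)).symm.injective h
  have hcardeq : ∀ v b : S, (U v).card = (U b).card := fun v b =>
    le_antisymm (hle b v) (hle v b)
  have himg : ∀ v b : S, (U v).image (theta s v) = U b := by
    intro v b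
    have hsub : U b ⊆ (U v).image (theta s v) := by
      intro t ht
      rw [Finset.mem_image]
      refine ⟨(Equiv.ofBijective _ (htb v)).symm t, ?_, ?_⟩
      · apply hpre v b t ht
        exact Equiv.ofBijective_apply_symm_apply _ _ _
      · exact Equiv.ofBijective_apply_symm_apply _ _ _
    apply (Finset.eq_of_subset_of_card_le hsub ?_).symm
    rw [Finset.card_image_of_injOn (Set.injOn_of_injective (htb v).1)]
    rw [hcardeq v b]
  have hUeq : ∀ v b b' : S, U b = U b' := by
    intro v b b'
    rw [← himg v b, ← himg v b']
  have : e ∈ U u := by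
    rw [hUeq e u e, hmemU]
    exact he
  rw [hmemU] at this
  exact this

end Core2


section Core3
set_option linter.unusedSectionVars false
variable {S : Type*} [Finite S] (s : S × S → S × S)

/-- `pw s u k = u^(k+1)`. -/
def pw (u : S) : ℕ → S
  | 0 => u
  | (k+1) => mul s (pw u k) u

lemma pw_add (hPE : IsPE s) (u : S) (a b : ℕ) :
    mul s (pw s u a) (pw s u b) = pw s u (a + b + 1) := by
  induction b with
  | zero => rfl
  | succ b ih =>
    show mul s (pw s u a) (mul s (pw s u b) u) = _
    rw [← pe1 s hPE, ih]
    rfl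

lemma exists_idem_pow (hPE : IsPE s) (u : S) :
    ∃ a : ℕ, mul s (pw s u a) (pw s u a) = pw s u a := by
  obtain ⟨i0, j0, hne0, hij0⟩ := Finite.exists_ne_map_eq_of_infinite (pw s u)
  -- wlog i < j
  obtain ⟨i, j, hij, hlt⟩ : ∃ i j : ℕ, pw s u i = pw s u j ∧ i < j := by
    rcases Nat.lt_or_ge i0 j0 with h | h
    · exact ⟨i0, j0, hij0, h⟩
    · exact ⟨j0, i0, hij0.symm, lt_of_le_of_ne h (fun hh => hne0 hh.symm)⟩
  set p := j - i with hp
  have hpi : i + p = j := by omega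
  have hstep : ∀ m, pw s u (i + m) = pw s u (j + m) := by
    intro m
    induction m with
    | zero => simpa using hij
    | succ m ih =>
      show pw s u ((i + m) + 1) = pw s u ((j + m) + 1)
      show mul s (pw s u (i + m)) u = mul s (pw s u (j + m)) u
      rw [ih]
  have hper : ∀ t m, pw s u (i + m) = pw s u (i + m + t * p) := by
    intro t
    induction t with
    | zero => intro m; simp
    | succ t ih =>
      intro m
      have h1 : i + m + (t + 1) * p = j + (m + t * p) := by
        rw [Nat.succ_mul]
        omega
      rw [h1, ← hstep (m + t * p)]
      have h2 : i + (m + t * p) = i + m + t * p := by omega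
      rw [h2, ← ih m]
  have hppos : 0 < p := by omega
  have hbig : i + 1 ≤ (i + 1) * p := Nat.le_mul_of_pos_right _ hppos
  set a := (i + 1) * p - 1 with ha
  refine ⟨a, ?_⟩
  rw [pw_add s hPE]
  have key : pw s u (i + (a - i)) = pw s u (i + (a - i) + (i + 1) * p) := hper (i + 1) (a - i)
  have e1 : i + (a - i) = a := by omega
  rw [e1] at key
  have e2 : a + (i + 1) * p = a + a + 1 := by omega
  rw [e2] at key
  exact key.symm

lemma exists_idem_lunit (hPE : IsPE s) (hbij : Function.Bijective s)
    (htb : ∀ x : S, Function.Bijective (theta s x)) (u : S) :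
    ∃ e : S, mul s e e = e ∧ mul s e u = u ∧ mul s u e = u := by
  obtain ⟨a, hae⟩ := exists_idem_pow s hPE u
  have hue : mul s u (pw s u a) = u := idem_right_id s hPE hbij htb hae u
  have h0 : mul s u (pw s u a) = pw s u (a + 1) := by
    have := pw_add s hPE u 0 a
    simpa [pw] using this
  have heu : mul s (pw s u a) u = pw s u (a + 1) := rfl
  refine ⟨pw s u a, hae, ?_, hue⟩
  rw [heu, ← h0, hue]

lemma theta_G1_id (hPE : IsPE s) (hbij : Function.Bijective s)
    (htb : ∀ x : S, Function.Bijective (theta s x))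
    {e₀ : S} (he₀ : mul s e₀ e₀ = e₀) (x z : S) :
    theta s (mul s (theta s e₀ e₀) x) z = z := by
  apply (htb x).1
  have h := pe3 s hPE (theta s e₀ e₀) x z
  rwa [theta_one_id s hPE hbij he₀ x] at h

lemma G1_inv (hPE : IsPE s) (hbij : Function.Bijective s)
    (htb : ∀ x : S, Function.Bijective (theta s x))
    {e₀ : S} (he₀ : mul s e₀ e₀ = e₀) (x : S) :
    ∃ h : S, (∃ t, h = mul s (theta s e₀ e₀) t) ∧
      mul s (mul s (theta s e₀ e₀) x) h = theta s e₀ e₀ ∧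
      mul s h (mul s (theta s e₀ e₀) x) = theta s e₀ e₀ := by
  classical
  letI : Fintype S := Fintype.ofFinite S
  set one := theta s e₀ e₀ with hone
  have honeidem : mul s one one = one := one_mul_one s hPE he₀
  set G : Finset S := Finset.univ.image (fun t => mul s one t) with hG
  have hmemG : ∀ a : S, a ∈ G ↔ ∃ t, mul s one t = a := by intro a; simp [hG]
  have honeG : one ∈ G := by rw [hmemG]; exact ⟨one, honeidem⟩
  -- right-multiplication by an element of G is injective on G and maps G into G
  have hkey : ∀ g ∈ G, ∀ a ∈ G, ∃ b ∈ G, mul s b g = a := by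
    intro g hg a ha
    have hmaps : ∀ c ∈ G, mul s c g ∈ G := by
      intro c hc
      rw [hmemG] at hc ⊢
      obtain ⟨t, ht⟩ := hc
      exact ⟨mul s t g, by rw [← pe1 s hPE, ht]⟩
    have hinj : Set.InjOn (fun c => mul s c g) G := by
      intro c hc0 d hd0 h
      have hc : c ∈ G := hc0
      have hd : d ∈ G := hd0
      rw [hmemG] at hc hd
      obtain ⟨tc, htc⟩ := hc
      obtain ⟨td, htd⟩ := hd
      have hc2 : s (c, g) = (mul s c g, g) := by
        rw [s_eq s]
        congr 1
        rw [← htc]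
        exact theta_G1_id s hPE hbij htb he₀ tc g
      have hd2 : s (d, g) = (mul s d g, g) := by
        rw [s_eq s]
        congr 1
        rw [← htd]
        exact theta_G1_id s hPE hbij htb he₀ td g
      have : s (c, g) = s (d, g) := by
        rw [hc2, hd2]
        have h' : mul s c g = mul s d g := h
        rw [h']
      have := hbij.1 this
      exact (Prod.mk.injEq _ _ _ _ ▸ this).1
    have himgG : G.image (fun c => mul s c g) = G := by
      apply Finset.eq_of_subset_of_card_le
      · intro b hb
        rw [Finset.mem_image] at hb
        obtain ⟨c, hc, hcb⟩ := hb
        rw [← hcb]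
        exact hmaps c hc
      · rw [Finset.card_image_of_injOn hinj]
    rw [← himgG, Finset.mem_image] at ha
    obtain ⟨b, hb, hba⟩ := ha
    exact ⟨b, hb, hba⟩
  set g := mul s one x with hgdef
  have hgG : g ∈ G := by rw [hmemG]; exact ⟨x, rfl⟩
  obtain ⟨h, hhG, hhg⟩ := hkey g hgG one honeG
  obtain ⟨k, hkG, hkh⟩ := hkey h hhG one honeG
  have honeg : mul s one g = g := by
    rw [hgdef, ← pe1 s hPE, honeidem]
  have hkg : k = g := by
    calc k = mul s k one := (idem_right_id s hPE hbij htb honeidem k).symm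
      _ = mul s k (mul s h g) := by rw [hhg]
      _ = mul s (mul s k h) g := (pe1 s hPE _ _ _).symm
      _ = mul s one g := by rw [hkh]
      _ = g := honeg
  rw [hmemG] at hhG
  obtain ⟨t, ht⟩ := hhG
  refine ⟨h, ⟨t, ht.symm⟩, ?_, hhg⟩
  rw [hkg] at hkh
  exact hkh

end Core3


section Core4
set_option linter.unusedSectionVars false
variable {S : Type*} [Finite S] (s : S × S → S × S)
variable (hPE : IsPE s) (hbij : Function.Bijective s)
  (htb : ∀ x : S, Function.Bijective (theta s x))

lemma one_g (hPE : IsPE s) {e₀ : S} (he₀ : mul s e₀ e₀ = e₀) (x : S) :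
    mul s (theta s e₀ e₀) (mul s (theta s e₀ e₀) x) = mul s (theta s e₀ e₀) x := by
  rw [← pe1 s hPE, one_mul_one s hPE he₀]

lemma rel_refl (hPE : IsPE s) (hbij : Function.Bijective s)
    (htb : ∀ x : S, Function.Bijective (theta s x))
    {e₀ : S} (he₀ : mul s e₀ e₀ = e₀) (u : S) :
    retRel s (theta s e₀ e₀) u u := by
  obtain ⟨e, he, heu, _⟩ := exists_idem_lunit s hPE hbij htb u
  refine ⟨e, e, mul s (theta s e₀ e₀) u, he, he, rfl, ⟨u, rfl⟩, ?_, ?_⟩ <;>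
  · rw [← pe1 s hPE, idem_right_id s hPE hbij htb (one_mul_one s hPE he₀) e, heu]

lemma rel_symm {one : S} {u v : S} (h : retRel s one u v) : retRel s one v u := by
  obtain ⟨e, f, g, he, hf, hef, hg, hu, hv⟩ := h
  exact ⟨f, e, g, hf, he, hef.symm, hg, hv, hu⟩

lemma one_absorb (hPE : IsPE s) (hbij : Function.Bijective s)
    (htb : ∀ x : S, Function.Bijective (theta s x))
    {e₀ : S} (he₀ : mul s e₀ e₀ = e₀) {f g : S} (hf : mul s f f = f)
    (hg : ∃ x : S, g = mul s (theta s e₀ e₀) x) :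
    mul s (theta s e₀ e₀) (mul s f g) = g := by
  obtain ⟨x, rfl⟩ := hg
  rw [← pe1 s hPE,
    idem_right_id s hPE hbij htb hf (theta s e₀ e₀), one_g s hPE he₀]

lemma rel_g_eq (hPE : IsPE s) (hbij : Function.Bijective s)
    (htb : ∀ x : S, Function.Bijective (theta s x))
    {e₀ : S} (he₀ : mul s e₀ e₀ = e₀) {f₁ e₂ g₁ g₂ : S}
    (hf₁ : mul s f₁ f₁ = f₁) (he₂ : mul s e₂ e₂ = e₂)
    (hg₁ : ∃ x : S, g₁ = mul s (theta s e₀ e₀) x)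
    (hg₂ : ∃ x : S, g₂ = mul s (theta s e₀ e₀) x)
    (hv : mul s f₁ g₁ = mul s e₂ g₂) : g₁ = g₂ := by
  have h1 := one_absorb s hPE hbij htb he₀ hf₁ hg₁
  have h2 := one_absorb s hPE hbij htb he₀ he₂ hg₂
  rw [← h1, ← h2, hv]

lemma rel_trans (hPE : IsPE s) (hbij : Function.Bijective s)
    (htb : ∀ x : S, Function.Bijective (theta s x))
    {e₀ : S} (he₀ : mul s e₀ e₀ = e₀) {u v w : S}
    (h1 : retRel s (theta s e₀ e₀) u v) (h2 : retRel s (theta s e₀ e₀) v w) :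
    retRel s (theta s e₀ e₀) u w := by
  obtain ⟨e₁, f₁, g₁, he₁, hf₁, hef₁, hg₁, hu, hv₁⟩ := h1
  obtain ⟨e₂, f₂, g₂, he₂, hf₂, hef₂, hg₂, hv₂, hw⟩ := h2
  have hgeq : g₁ = g₂ :=
    rel_g_eq s hPE hbij htb he₀ hf₁ he₂ hg₁ hg₂ (hv₁.symm.trans hv₂)
  rw [← hgeq] at hv₂ hw
  have hfe : f₁ = e₂ := by
    obtain ⟨x₁, hx₁⟩ := hg₁
    obtain ⟨h, _, hg1h, _⟩ := G1_inv s hPE hbij htb he₀ x₁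
    rw [← hx₁] at hg1h
    calc f₁ = mul s f₁ (theta s e₀ e₀) :=
          (idem_right_id s hPE hbij htb (one_mul_one s hPE he₀) f₁).symm
      _ = mul s f₁ (mul s g₁ h) := by rw [hg1h]
      _ = mul s (mul s f₁ g₁) h := (pe1 s hPE _ _ _).symm
      _ = mul s (mul s e₂ g₁) h := by rw [hv₁.symm.trans hv₂]
      _ = mul s e₂ (mul s g₁ h) := pe1 s hPE _ _ _
      _ = mul s e₂ (theta s e₀ e₀) := by rw [hg1h]
      _ = e₂ := idem_right_id s hPE hbij htb (one_mul_one s hPE he₀) e₂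
  refine ⟨e₁, f₂, g₁, he₁, hf₂, ?_, hg₁, hu, hw⟩
  rw [hef₁, hfe, hef₂]

lemma rel_theta_eq (hPE : IsPE s) (hbij : Function.Bijective s)
    (htb : ∀ x : S, Function.Bijective (theta s x))
    {e₀ : S} (he₀ : mul s e₀ e₀ = e₀) {u v : S}
    (h : retRel s (theta s e₀ e₀) u v) : theta s u = theta s v := by
  obtain ⟨e, f, g, he, hf, hef, ⟨x, hx⟩, hu, hv⟩ := h
  funext z
  apply (htb (theta s e g)).1
  have h1 := pe3 s hPE e g z
  have h2 := pe3 s hPE f g z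
  rw [← hu] at h1
  rw [← hv] at h2
  rw [← hef] at h2
  rw [h1, h2]

lemma rel_left_cong (hPE : IsPE s) (hbij : Function.Bijective s)
    (htb : ∀ x : S, Function.Bijective (theta s x))
    {e₀ : S} (he₀ : mul s e₀ e₀ = e₀) {u v : S}
    (h : retRel s (theta s e₀ e₀) u v) (q : S) :
    retRel s (theta s e₀ e₀) (mul s q u) (mul s q v) := by
  obtain ⟨e, f, g, he, hf, hef, hg, hu, hv⟩ := h
  have h1 : mul s q u = mul s q g := by
    rw [hu, ← pe1 s hPE, idem_right_id s hPE hbij htb he q]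
  have h2 : mul s q v = mul s q g := by
    rw [hv, ← pe1 s hPE, idem_right_id s hPE hbij htb hf q]
  rw [h1, h2]
  exact rel_refl s hPE hbij htb he₀ _

lemma rel_right_cong (hPE : IsPE s) {u v : S} {one : S}
    (h : retRel s one u v) (q : S) :
    retRel s one (mul s u q) (mul s v q) := by
  obtain ⟨e, f, g, he, hf, hef, ⟨x, hx⟩, hu, hv⟩ := h
  refine ⟨e, f, mul s g q, he, hf, hef, ⟨mul s x q, by rw [hx, pe1 s hPE]⟩, ?_, ?_⟩
  · rw [hu, pe1 s hPE]
  · rw [hv, pe1 s hPE]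

lemma rel_theta_cong (hPE : IsPE s) (hbij : Function.Bijective s)
    (htb : ∀ x : S, Function.Bijective (theta s x))
    {e₀ : S} (he₀ : mul s e₀ e₀ = e₀) {u v : S}
    (h : retRel s (theta s e₀ e₀) u v) (q : S) :
    retRel s (theta s e₀ e₀) (theta s q u) (theta s q v) := by
  obtain ⟨e, f, g, he, hf, hef, hg, hu, hv⟩ := h
  have hqe : mul s q e = q := idem_right_id s hPE hbij htb he q
  have hqf : mul s q f = q := idem_right_id s hPE hbij htb hf q
  set p := theta s q e with hpdef
  set p' := theta s q f with hp'def
  set hh := theta s q g with hhdef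
  have hthu : theta s q u = mul s p hh := by
    have := pe2 s hPE q e g
    rw [hqe, ← hu] at this
    exact this.symm
  have hthv : theta s q v = mul s p' hh := by
    have := pe2 s hPE q f g
    rw [hqf, ← hv] at this
    exact this.symm
  have hp : mul s p p = p := by
    have := pe2 s hPE q e e
    rw [hqe, he] at this
    exact this
  have hp' : mul s p' p' = p' := by
    have := pe2 s hPE q f f
    rw [hqf, hf] at this
    exact this
  have hθpp' : theta s p = theta s p' := by
    funext w
    obtain ⟨w', rfl⟩ := (htb q).2 w
    have h1 := pe3 s hPE q e w'
    have h2 := pe3 s hPE q f w'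
    rw [hqe] at h1
    rw [hqf] at h2
    rw [← hpdef] at h1
    rw [← hp'def] at h2
    rw [h1, h2, hef]
  obtain ⟨E, hE, hEh, _⟩ := exists_idem_lunit s hPE hbij htb hh
  have honei : mul s (theta s e₀ e₀) (theta s e₀ e₀) = theta s e₀ e₀ :=
    one_mul_one s hPE he₀
  have key : ∀ r : S, mul s r r = r →
      mul s (mul s r E) (mul s (theta s e₀ e₀) hh) = mul s r hh := by
    intro r hr
    calc mul s (mul s r E) (mul s (theta s e₀ e₀) hh)
        = mul s r (mul s E (mul s (theta s e₀ e₀) hh)) := pe1 s hPE _ _ _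
      _ = mul s r (mul s (mul s E (theta s e₀ e₀)) hh) := by rw [pe1 s hPE]
      _ = mul s r (mul s E hh) := by rw [idem_right_id s hPE hbij htb honei E]
      _ = mul s r hh := by rw [hEh]
  have keyidem : ∀ r : S, mul s r r = r → mul s (mul s r E) (mul s r E) = mul s r E := by
    intro r hr
    calc mul s (mul s r E) (mul s r E)
        = mul s r (mul s E (mul s r E)) := pe1 s hPE _ _ _
      _ = mul s r (mul s (mul s E r) E) := by rw [pe1 s hPE]
      _ = mul s r (mul s E E) := by rw [idem_right_id s hPE hbij htb hr E]
      _ = mul s r E := by rw [hE]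
  have hθE : theta s (mul s p E) = theta s (mul s p' E) := by
    funext w
    apply (htb (theta s p E)).1
    have h1 := pe3 s hPE p E w
    have h2 := pe3 s hPE p' E w
    rw [← hθpp'] at h2
    rw [h1, h2]
  exact ⟨mul s p E, mul s p' E, mul s (theta s e₀ e₀) hh,
    keyidem p hp, keyidem p' hp', hθE, ⟨hh, rfl⟩,
    by rw [hthu, key p hp], by rw [hthv, key p' hp']⟩

end Core4

/-- the relation `≈` is an equivalence relation which is a congruence of
`(S,·)`, `u ≈ v` implies `θ_u = θ_v` and `θ_q(u) ≈ θ_q(v)`; consequently `s` induces a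
bijective set-theoretic solution to the Pentagon Equation on the quotient `S/≈`
(the retract of `(S,s)`). -/
theorem statement11 {S : Type*} [Finite S] [Nonempty S] (s : S × S → S × S)
    (hPE : IsPE s) (hbij : Function.Bijective s)
    (e₀ : S) (he₀ : mul s e₀ e₀ = e₀) :
    Equivalence (retRel s (theta s e₀ e₀)) ∧
    (∀ u v q : S, retRel s (theta s e₀ e₀) u v →
      retRel s (theta s e₀ e₀) (mul s q u) (mul s q v) ∧
      retRel s (theta s e₀ e₀) (mul s u q) (mul s v q)) ∧
    (∀ u v : S, retRel s (theta s e₀ e₀) u v → theta s u = theta s v) ∧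
    (∀ u v q : S, retRel s (theta s e₀ e₀) u v →
      retRel s (theta s e₀ e₀) (theta s q u) (theta s q v)) ∧
    (∃ (T : Type) (π : S → T) (sbar : T × T → T × T),
      Function.Surjective π ∧
      (∀ u v : S, π u = π v ↔ retRel s (theta s e₀ e₀) u v) ∧
      IsPE sbar ∧ Function.Bijective sbar ∧
      (∀ p : S × S, sbar (π p.1, π p.2) = (π (s p).1, π (s p).2))) := by
  have htb : ∀ x : S, Function.Bijective (theta s x) := theta_bij s hPE hbij he₀
  have hequiv : Equivalence (retRel s (theta s e₀ e₀)) :=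
    ⟨fun u => rel_refl s hPE hbij htb he₀ u,
     fun h => rel_symm s h,
     fun h1 h2 => rel_trans s hPE hbij htb he₀ h1 h2⟩
  refine ⟨hequiv,
    fun u v q h => ⟨rel_left_cong s hPE hbij htb he₀ h q, rel_right_cong s hPE h q⟩,
    fun u v h => rel_theta_eq s hPE hbij htb he₀ h,
    fun u v q h => rel_theta_cong s hPE hbij htb he₀ h q, ?_⟩
  -- quotient construction
  letI st : Setoid S := ⟨retRel s (theta s e₀ e₀), hequiv⟩
  have hmulc : Relator.LiftFun (· ≈ ·) (Relator.LiftFun (· ≈ ·) (· ≈ ·)) (mul s) (mul s) := by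
    intro a b hab c d hcd
    exact hequiv.trans (rel_right_cong s hPE hab c) (rel_left_cong s hPE hbij htb he₀ hcd b)
  have hthc : Relator.LiftFun (· ≈ ·) (Relator.LiftFun (· ≈ ·) (· ≈ ·)) (theta s) (theta s) := by
    intro a b hab c d hcd
    have h1 : theta s a c = theta s b c := by
      rw [rel_theta_eq s hPE hbij htb he₀ hab]
    rw [h1]
    exact rel_theta_cong s hPE hbij htb he₀ hcd b
  let mbar : Quotient st → Quotient st → Quotient st := Quotient.map₂ (mul s) hmulc
  let tbar : Quotient st → Quotient st → Quotient st := Quotient.map₂ (theta s) hthc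
  letI : Finite (Quotient st) :=
    Finite.of_surjective (Quotient.mk st) (fun t => Quotient.exists_rep t)
  letI : Fintype (Quotient st) := Fintype.ofFinite _
  let eqv : Quotient st ≃ Fin (Fintype.card (Quotient st)) := Fintype.equivFin _
  let π : S → Fin (Fintype.card (Quotient st)) := fun u => eqv (Quotient.mk st u)
  let sbar : (Fin (Fintype.card (Quotient st)) × Fin (Fintype.card (Quotient st))) →
      (Fin (Fintype.card (Quotient st)) × Fin (Fintype.card (Quotient st))) :=
    fun p => (eqv (mbar (eqv.symm p.1) (eqv.symm p.2)),
              eqv (tbar (eqv.symm p.1) (eqv.symm p.2)))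
  have hπsurj : Function.Surjective π := by
    intro t
    obtain ⟨a, ha⟩ := Quotient.exists_rep (eqv.symm t)
    refine ⟨a, ?_⟩
    show eqv (Quotient.mk st a) = t
    rw [ha, Equiv.apply_symm_apply]
  have hcomm : ∀ a b : S,
      sbar (π a, π b) = (π (mul s a b), π (theta s a b)) := by
    intro a b
    show (eqv (mbar (eqv.symm (eqv (Quotient.mk st a))) (eqv.symm (eqv (Quotient.mk st b)))),
          eqv (tbar (eqv.symm (eqv (Quotient.mk st a))) (eqv.symm (eqv (Quotient.mk st b)))))
        = _
    rw [Equiv.symm_apply_apply, Equiv.symm_apply_apply]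
    rfl
  refine ⟨Fin (Fintype.card (Quotient st)), π, sbar, hπsurj, ?_, ?_, ?_, ?_⟩
  · intro u v
    constructor
    · intro h
      have h2 : Quotient.mk st u = Quotient.mk st v := eqv.injective h
      exact Quotient.eq.mp h2
    · intro h
      show eqv (Quotient.mk st u) = eqv (Quotient.mk st v)
      rw [Quotient.sound h]
  · -- IsPE sbar
    have hπ : ∀ a : S, π a = eqv (Quotient.mk st a) := fun _ => rfl
    have hmb : ∀ a b : S, mbar (Quotient.mk st a) (Quotient.mk st b)
        = Quotient.mk st (mul s a b) := fun _ _ => rfl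
    have htbr : ∀ a b : S, tbar (Quotient.mk st a) (Quotient.mk st b)
        = Quotient.mk st (theta s a b) := fun _ _ => rfl
    have hsb : ∀ q r : Quotient st, sbar (eqv q, eqv r) = (eqv (mbar q r), eqv (tbar q r)) := by
      intro q r
      show (eqv (mbar (eqv.symm (eqv q)) (eqv.symm (eqv r))),
            eqv (tbar (eqv.symm (eqv q)) (eqv.symm (eqv r)))) = _
      rw [Equiv.symm_apply_apply, Equiv.symm_apply_apply]
    funext p
    obtain ⟨x, y, z⟩ := p
    obtain ⟨a, rfl⟩ := hπsurj x
    obtain ⟨b, rfl⟩ := hπsurj y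
    obtain ⟨c, rfl⟩ := hπsurj z
    simp only [Function.comp_apply, s12, s13, s23, hπ, hsb, hmb, htbr,
      Equiv.symm_apply_apply]
    rw [pe1 s hPE a b c, pe2 s hPE a b c, pe3 s hPE a b c]
  · -- bijective
    have hsurj : Function.Surjective sbar := by
      rintro ⟨t1, t2⟩
      obtain ⟨a1, ha1⟩ := hπsurj t1
      obtain ⟨a2, ha2⟩ := hπsurj t2
      obtain ⟨p, hp⟩ := hbij.2 (a1, a2)
      refine ⟨(π p.1, π p.2), ?_⟩
      rw [hcomm p.1 p.2]
      have h1 : mul s p.1 p.2 = a1 := by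
        have : (s (p.1, p.2)).1 = a1 := by rw [Prod.mk.eta, hp]
        exact this
      have h2 : theta s p.1 p.2 = a2 := by
        have : (s (p.1, p.2)).2 = a2 := by rw [Prod.mk.eta, hp]
        exact this
      rw [h1, h2, ha1, ha2]
    exact ⟨Finite.injective_iff_surjective.mpr hsurj, hsurj⟩
  · intro p
    have := hcomm p.1 p.2
    exact this


end PE
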